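/- Let p be the law of a Markov chain of order m (1 ≤ m ≤ T) on S^T. For any path s^T of positive probability and any integer k with m ≤ k ≤ T, R̄_k(s^T) = R̄_m(s^T) + (k-m)·R̄_∞(s^T), where R̄_k(s^T) := -(1/T) log ∏_{j=1-k}^{T-1} p(s_{(j+1)∨1}^{(j+k)∧T}) and R̄_∞(s^T) := -(1/T) log p(s^T). -/

import Mathlib

/-- Let `p` be the law of a Markov chain of order `m` (`1 ≤ m ≤ T`) on
`S^T`, so a window probability `p(s_a^n)` factors as the probability of the first `m`
coordinates of the window times the conditional probabilities `c t = p(s_t | s_{t-m}^{t-1})`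
for the remaining coordinates. For any path of positive probability and any `m ≤ k ≤ T`,
`R̄_k(s^T) = R̄_m(s^T) + (k-m)·R̄_∞(s^T)`, where
`R̄_j(s^T) := -(1/T) log ∏_{j'=1-j}^{T-1} p(s_{(j'+1)∨1}^{(j'+j)∧T})` and
`R̄_∞(s^T) := -(1/T) log p(s^T)`. -/
theorem stmt7 (T m k : ℕ) (hT : 1 ≤ T) (hm : 1 ≤ m) (hmT : m ≤ T) (hmk : m ≤ k)
    (hkT : k ≤ T)
    -- `base a n` is the probability `p(s_a^n)` of a short window (length ≤ m) of the
    -- fixed path `s`; `c t` is the conditional probability `p(s_t | s_{t-m}^{t-1})`.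
    (base : ℕ → ℕ → ℝ) (c : ℕ → ℝ)
    -- `win a n` is the window probability `p(s_a^n)`, factored via the order-`m`
    -- Markov property.
    (win : ℕ → ℕ → ℝ)
    (hwin_short : ∀ a n, a ≤ n → n < a + m → win a n = base a n)
    (hwin_long : ∀ a n, a + m ≤ n →
      win a n = base a (a + m - 1) * ∏ t ∈ Finset.Icc (a + m) n, c t)
    -- positivity (the path has positive probability)
    (hbase : ∀ a n, 1 ≤ a → a ≤ n → n ≤ T → 0 < base a n)
    (hc : ∀ t, 1 ≤ t → t ≤ T → 0 < c t)
    -- `U j = Ū_j(s^T)` is the product of the length-`j` window probabilities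
    -- (reindexed by `i = j' - (1 - j)`)
    (U : ℕ → ℝ)
    (hU : ∀ j, U j = ∏ i ∈ Finset.range (T + j - 1), win (max 1 (i + 2 - j)) (min T (i + 1)))
    (Rbar : ℕ → ℝ) (hRbar : ∀ j, Rbar j = -(1 / (T : ℝ)) * Real.log (U j))
    (Rinf : ℝ) (hRinf : Rinf = -(1 / (T : ℝ)) * Real.log (win 1 T)) :
    Rbar k = Rbar m + ((k : ℝ) - (m : ℝ)) * Rinf := by
  -- generalized factorization: valid for windows of length ≥ m
  have hwin_ge : ∀ a n, a + m ≤ n + 1 →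
      win a n = base a (a + m - 1) * ∏ t ∈ Finset.Icc (a + m) n, c t := by
    intro a n h
    by_cases h' : a + m ≤ n
    · exact hwin_long a n h'
    · rw [hwin_short a n (by omega) (by omega), Finset.Icc_eq_empty (by omega),
        Finset.prod_empty, mul_one, show a + m - 1 = n from by omega]
  -- positivity of windows
  have hwin_pos : ∀ a n, 1 ≤ a → a ≤ n → n ≤ T → 0 < win a n := by
    intro a n ha han hnT
    by_cases h : a + m ≤ n
    · rw [hwin_long a n h]
      refine mul_pos (hbase a (a + m - 1) ha (by omega) (by omega)) ?_
      refine Finset.prod_pos fun t ht => ?_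
      rw [Finset.mem_Icc] at ht
      exact hc t (by omega) (by omega)
    · rw [hwin_short a n han (by omega)]
      exact hbase a n ha han hnT
  have hwT : 0 < win 1 T := hwin_pos 1 T le_rfl hT le_rfl
  have hUm : 0 < U m := by
    rw [hU m]
    refine Finset.prod_pos fun i hi => ?_
    rw [Finset.mem_range] at hi
    exact hwin_pos _ _ (by omega) (by omega) (by omega)
  -- the key step: going from window length j to j+1 multiplies U by win 1 T
  have step : ∀ j, m ≤ j → j < T → U (j + 1) = U j * win 1 T := by
    intro j hj hjT
    rw [hU (j + 1), hU j,
      show T + (j + 1) - 1 = (j + 1) + (T - 1) from by omega,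
      Finset.prod_range_add, Finset.prod_range_succ,
      show T + j - 1 = j + (T - 1) from by omega,
      Finset.prod_range_add]
    have eA : (∏ i ∈ Finset.range j, win (max 1 (i + 2 - (j + 1))) (min T (i + 1)))
        = ∏ i ∈ Finset.range j, win (max 1 (i + 2 - j)) (min T (i + 1)) := by
      refine Finset.prod_congr rfl fun i hi => ?_
      rw [Finset.mem_range] at hi
      rw [show max 1 (i + 2 - (j + 1)) = max 1 (i + 2 - j) from by omega]
    have eMid : win (max 1 (j + 2 - (j + 1))) (min T (j + 1)) = win 1 (j + 1) := by
      rw [show max 1 (j + 2 - (j + 1)) = 1 from by omega,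
        show min T (j + 1) = j + 1 from by omega]
    have eB' : (∏ i ∈ Finset.range (T - 1),
          win (max 1 (j + 1 + i + 2 - (j + 1))) (min T (j + 1 + i + 1)))
        = ∏ i ∈ Finset.range (T - 1), win (i + 2) (min T (j + i + 2)) := by
      refine Finset.prod_congr rfl fun i hi => ?_
      rw [show max 1 (j + 1 + i + 2 - (j + 1)) = i + 2 from by omega,
        show min T (j + 1 + i + 1) = min T (j + i + 2) from by omega]
    have eB0 : (∏ i ∈ Finset.range (T - 1),
          win (max 1 (j + i + 2 - j)) (min T (j + i + 1)))
        = ∏ i ∈ Finset.range (T - 1), win (i + 2) (min T (j + i + 1)) := by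
      refine Finset.prod_congr rfl fun i hi => ?_
      rw [show max 1 (j + i + 2 - j) = i + 2 from by omega]
    have gstep : ∀ i ∈ Finset.range (T - 1), win (i + 2) (min T (j + i + 2)) =
        win (i + 2) (min T (j + i + 1)) * (if j + i + 2 ≤ T then c (j + i + 2) else 1) := by
      intro i hi
      rw [Finset.mem_range] at hi
      by_cases h : j + i + 2 ≤ T
      · rw [if_pos h, show min T (j + i + 2) = j + i + 2 from by omega,
          show min T (j + i + 1) = j + i + 1 from by omega,
          hwin_ge (i + 2) (j + i + 2) (by omega), hwin_ge (i + 2) (j + i + 1) (by omega),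
          show j + i + 2 = j + i + 1 + 1 from by omega,
          Finset.prod_Icc_succ_top (by omega : i + 2 + m ≤ j + i + 1 + 1)]
        ring
      · rw [if_neg h, mul_one, show min T (j + i + 2) = min T (j + i + 1) from by omega]
    have eB : (∏ i ∈ Finset.range (T - 1), win (i + 2) (min T (j + i + 2)))
        = (∏ i ∈ Finset.range (T - 1), win (i + 2) (min T (j + i + 1)))
          * ∏ i ∈ Finset.range (T - j - 1), c (j + 2 + i) := by
      rw [Finset.prod_congr rfl gstep, Finset.prod_mul_distrib]
      congr 1
      rw [show T - 1 = (T - j - 1) + j from by omega, Finset.prod_range_add]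
      have h2 : (∏ i ∈ Finset.range j, if j + (T - j - 1 + i) + 2 ≤ T then c (j + (T - j - 1 + i) + 2) else 1) = 1 := by
        refine Finset.prod_eq_one fun i hi => ?_
        rw [if_neg (by omega)]
      rw [h2, mul_one]
      refine Finset.prod_congr rfl fun i hi => ?_
      rw [Finset.mem_range] at hi
      rw [if_pos (by omega), show j + i + 2 = j + 2 + i from by omega]
    have eC : win 1 (j + 1) * (∏ i ∈ Finset.range (T - j - 1), c (j + 2 + i)) = win 1 T := by
      rw [hwin_ge 1 (j + 1) (by omega), hwin_ge 1 T (by omega)]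
      rw [mul_assoc]
      congr 1
      have hr : (∏ i ∈ Finset.range (T - j - 1), c (j + 2 + i))
          = ∏ t ∈ Finset.Ioc (j + 1) T, c t := by
        rw [show T - j - 1 = T + 1 - (j + 2) from by omega, ← Finset.prod_Ico_eq_prod_range,
          Finset.Ico_add_one_right_eq_Icc, show Finset.Icc (j + 2) T = Finset.Ioc (j + 1) T from by
            rw [← Finset.Icc_add_one_left_eq_Ioc]; rfl]
      rw [hr, show Finset.Icc (1 + m) (j + 1) = Finset.Ioc m (j + 1) from by
          rw [← Finset.Icc_add_one_left_eq_Ioc]; congr 1; omega,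
        show Finset.Icc (1 + m) T = Finset.Ioc m T from by
          rw [← Finset.Icc_add_one_left_eq_Ioc]; congr 1; omega]
      exact Finset.prod_Ioc_consecutive c (by omega) (by omega)
    rw [eA, eMid, eB', eB0, eB, ← eC]
    ring
  -- iterate the step
  have key : ∀ d, m + d ≤ T → U (m + d) = U m * (win 1 T) ^ d := by
    intro d
    induction d with
    | zero => intro _; simp
    | succ d ih =>
      intro hd
      rw [show m + (d + 1) = (m + d) + 1 from by omega, step (m + d) (by omega) (by omega),
        ih (by omega), pow_succ, mul_assoc]
  have hUk : U k = U m * win 1 T ^ (k - m) := by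
    have := key (k - m) (by omega)
    rwa [show m + (k - m) = k from by omega] at this
  rw [hRbar k, hRbar m, hRinf, hUk,
    Real.log_mul (ne_of_gt hUm) (pow_ne_zero _ (ne_of_gt hwT)), Real.log_pow,
    Nat.cast_sub hmk]
  ring
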